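/- arXiv:2007.09125 — 2 statements merged into one kernel-verified Lean document; each statement's English description precedes it below -/
import Mathlib

section
/- If an oriented hypergraph over ℤ has an algebraic spanning tree over the integers, then ℬ = 𝒞^⊥: every x ∈ C_1 with ⟨x,c⟩ = 0 for all c ∈ Ker∂_1 lies in γ^{-1}(Im δ^0). -/
open Finset

/-- Incidence sign of vertex `v` in edge `e = (A e, B e)`. -/
def hsgn {V E : Type*} [DecidableEq V] (A B : E → Finset V) (e : E) (v : V) : ℤ :=
  (if v ∈ B e then 1 else 0) - (if v ∈ A e then 1 else 0)

/-- The boundary homomorphism `∂₁ : C₁ → C₀` of an oriented hypergraph over `ℤ`. -/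
noncomputable def bdry {V E : Type*} [DecidableEq V] [Fintype E] (A B : E → Finset V) :
    (E → ℤ) →ₗ[ℤ] (V → ℤ) :=
  LinearMap.pi fun v => ∑ e : E, hsgn A B e v • (LinearMap.proj e : (E → ℤ) →ₗ[ℤ] ℤ)

/-- The coboundary homomorphism `δ⁰ : C⁰ → C¹`, the dual of `∂₁`. -/
noncomputable def cobdry {V E : Type*} [DecidableEq V] [Fintype E] (A B : E → Finset V) :
    Module.Dual ℤ (V → ℤ) →ₗ[ℤ] Module.Dual ℤ (E → ℤ) :=
  (bdry A B).dualMap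

/-- The canonical map `γ` from chains to cochains (dual-basis map). -/
noncomputable def gam (ι : Type*) [Fintype ι] [DecidableEq ι] :
    (ι → ℤ) →ₗ[ℤ] Module.Dual ℤ (ι → ℤ) :=
  (Pi.basisFun ℤ ι).toDual

/-- a hypergraph with an algebraic spanning tree over the integers
satisfies `ℬ = 𝒞^⊥`: every `x ∈ C₁` orthogonal to all of `Ker ∂₁` lies in `γ⁻¹(Im δ⁰)`. -/
lemma gam_apply {ι : Type*} [Fintype ι] [DecidableEq ι] (x y : ι → ℤ) :
    gam ι x y = ∑ e, y e * x e := by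
  conv_lhs => rw [show gam ι x = (Pi.basisFun ℤ ι).toDual x from rfl,
      ← (Pi.basisFun ℤ ι).sum_repr y]
  rw [map_sum]
  refine Finset.sum_congr rfl fun e _ => ?_
  rw [map_smul, Module.Basis.toDual_eq_repr, Pi.basisFun_repr, Pi.basisFun_repr, smul_eq_mul]

lemma mem_B_orth {V E : Type*} [Fintype V] [Fintype E] [DecidableEq V] [DecidableEq E]
    (A B : E → Finset V) (b : E → ℤ)
    (hb : b ∈ Submodule.comap (gam E) (LinearMap.range (cobdry A B)))
    (c : E → ℤ) (hc : c ∈ LinearMap.ker (bdry A B)) :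
    ∑ e, c e * b e = 0 := by
  obtain ⟨f, hf⟩ := hb
  have : gam E b c = 0 := by
    rw [← hf]
    show f (bdry A B c) = 0
    rw [LinearMap.mem_ker.mp hc, map_zero]
  rwa [gam_apply] at this

/-- main -/
theorem stmt13 {V E : Type*} [Fintype V] [Fintype E] [DecidableEq V] [DecidableEq E]
    (A B : E → Finset V) (hdisj : ∀ e, Disjoint (A e) (B e))
    (T : Finset E)
    (bB : Module.Basis {t : E // t ∈ T} ℤ
      ↥(Submodule.comap (gam E) (LinearMap.range (cobdry A B))))
    (hbB : ∀ t t' : {t : E // t ∈ T},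
      (bB t : E → ℤ) t'.1 = (if t = t' then 1 else 0))
    (bC : Module.Basis {e : E // e ∉ T} ℤ ↥(LinearMap.ker (bdry A B)))
    (hbC : ∀ e e' : {e : E // e ∉ T},
      (bC e : E → ℤ) e'.1 = (if e = e' then 1 else 0))
    (x : E → ℤ) (hx : ∀ c ∈ LinearMap.ker (bdry A B), ∑ e : E, x e * c e = 0) :
    x ∈ Submodule.comap (gam E) (LinearMap.range (cobdry A B)) := by
  classical
  set Y : ↥(Submodule.comap (gam E) (LinearMap.range (cobdry A B))) :=
    ∑ t : {t : E // t ∈ T}, x t.1 • bB t with hY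
  have hYcoe : (Y : E → ℤ) = ∑ t : {t : E // t ∈ T}, x t.1 • ((bB t : E → ℤ)) := by
    simp [hY]
  set z : E → ℤ := x - (Y : E → ℤ) with hzdef
  have hzT : ∀ t ∈ T, z t = 0 := by
    intro t ht
    have : (Y : E → ℤ) t = x t := by
      rw [hYcoe]
      rw [Finset.sum_apply]
      have : ∀ t' : {t : E // t ∈ T},
          (x t'.1 • ((bB t' : E → ℤ))) t = if t' = ⟨t, ht⟩ then x t'.1 else 0 := by
        intro t'
        have := hbB t' ⟨t, ht⟩
        simp only [Pi.smul_apply, smul_eq_mul, this]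
        split <;> simp
      rw [Finset.sum_congr rfl fun t' _ => this t']
      simp
    simp [hzdef, this]
  have hzorth : ∀ c ∈ LinearMap.ker (bdry A B), ∑ e, z e * c e = 0 := by
    intro c hc
    have h1 := hx c hc
    have h2 := mem_B_orth A B (Y : E → ℤ) Y.2 c hc
    have : ∑ e, z e * c e = ∑ e, x e * c e - ∑ e, c e * (Y : E → ℤ) e := by
      rw [← Finset.sum_sub_distrib]
      apply Finset.sum_congr rfl
      intro e _
      simp [hzdef]; ring
    rw [this, h1, h2, sub_zero]
  set c : ↥(LinearMap.ker (bdry A B)) := ∑ e : {e : E // e ∉ T}, z e.1 • bC e with hc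
  have hccoe : (c : E → ℤ) = ∑ e : {e : E // e ∉ T}, z e.1 • ((bC e : E → ℤ)) := by
    simp [hc]
  have hcval : ∀ e (he : e ∉ T), (c : E → ℤ) e = z e := by
    intro e he
    rw [hccoe, Finset.sum_apply]
    have : ∀ e' : {e : E // e ∉ T},
        (z e'.1 • ((bC e' : E → ℤ))) e = if e' = ⟨e, he⟩ then z e'.1 else 0 := by
      intro e'
      have := hbC e' ⟨e, he⟩
      simp only [Pi.smul_apply, smul_eq_mul, this]
      split <;> simp
    rw [Finset.sum_congr rfl fun e' _ => this e']
    simp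
  have hsum : ∑ e, z e * (c : E → ℤ) e = 0 := hzorth (c : E → ℤ) c.2
  rw [← Finset.sum_add_sum_compl T] at hsum
  have hT0 : ∑ e ∈ T, z e * (c : E → ℤ) e = 0 :=
    Finset.sum_eq_zero fun e he => by rw [hzT e he, zero_mul]
  rw [hT0, zero_add] at hsum
  have hsq : ∑ e ∈ Tᶜ, z e * z e = 0 := by
    rw [← hsum]
    apply Finset.sum_congr rfl
    intro e he
    rw [hcval e (Finset.mem_compl.mp he)]
  have hzTc : ∀ e ∈ Tᶜ, z e * z e = 0 :=
    (Finset.sum_eq_zero_iff_of_nonneg fun e _ => mul_self_nonneg (z e)).mp hsq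
  have hz0 : z = 0 := by
    funext e
    by_cases he : e ∈ T
    · exact hzT e he
    · have := hzTc e (Finset.mem_compl.mpr he)
      exact mul_self_eq_zero.mp this
  have hx' : x = (Y : E → ℤ) := sub_eq_zero.mp hz0
  rw [hx']
  exact Y.2
end

section
/- The hypergraph with V = {v_1,v_2,v_3}, E = {e_1,e_2,e_3}, e_i = ({v_j,v_k},{v_i}) for {i,j,k}={1,2,3}, has no algebraic spanning tree over the integers: there is no T ⊆ E admitting bases of ℬ = γ^{-1}(Im δ^0) and 𝒞 = Ker∂_1 satisfying the spanning tree axioms over ℤ. -/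
open Finset

lemma bdry_apply' (A B : Fin 3 → Finset (Fin 3)) (x : Fin 3 → ℤ) (v : Fin 3) :
    bdry A B x v = ∑ e, hsgn A B e v * x e := by
  simp [bdry]

lemma gam_single (x : Fin 3 → ℤ) (j : Fin 3) : gam (Fin 3) x (Pi.single j 1) = x j := by
  have : (Pi.single j 1 : Fin 3 → ℤ) = Pi.basisFun ℤ (Fin 3) j := by
    simp [Pi.basisFun_apply]
  rw [this, gam, Module.Basis.toDual_apply_left, Pi.basisFun_repr]

/-- the hypergraph on `V = {v₁,v₂,v₃}`, `E = {e₁,e₂,e₃}` with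
`eᵢ = ({vⱼ,vₖ},{vᵢ})` has no algebraic spanning tree over the integers. -/
theorem stmt17 :
    let A : Fin 3 → Finset (Fin 3) := fun i => ({i} : Finset (Fin 3))ᶜ
    let B : Fin 3 → Finset (Fin 3) := fun i => {i}
    ¬ ∃ (T : Finset (Fin 3))
        (bB : Module.Basis {t : Fin 3 // t ∈ T} ℤ
          ↥(Submodule.comap (gam (Fin 3)) (LinearMap.range (cobdry A B))))
        (bC : Module.Basis {e : Fin 3 // e ∉ T} ℤ ↥(LinearMap.ker (bdry A B))),
      (∀ t t' : {t : Fin 3 // t ∈ T},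
        (bB t : Fin 3 → ℤ) t'.1 = (if t = t' then 1 else 0)) ∧
      (∀ e e' : {e : Fin 3 // e ∉ T},
        (bC e : Fin 3 → ℤ) e'.1 = (if e = e' then 1 else 0)) := by
  intro A B
  rintro ⟨T, bB, bC, hbB, hbC⟩
  -- hsgn values
  have hs : ∀ e v : Fin 3, hsgn A B e v = if v = e then 1 else -1 := by decide
  -- ker bdry = ⊥
  have hker : ∀ x : Fin 3 → ℤ, bdry A B x = 0 → x = 0 := by
    intro x hx
    have h := fun v => congrFun hx v
    simp only [bdry_apply', Fin.sum_univ_three, hs, Pi.zero_apply] at h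
    have h0 := h 0; have h1 := h 1; have h2 := h 2
    norm_num at h0 h1 h2
    funext v; fin_cases v <;> simp <;> omega
  -- T = univ
  have hT : ∀ e : Fin 3, e ∈ T := by
    intro e
    by_contra he
    have h1 := hbC ⟨e, he⟩ ⟨e, he⟩
    have hz : ((bC ⟨e, he⟩ : ↥(LinearMap.ker (bdry A B))) : Fin 3 → ℤ) = 0 :=
      hker _ (LinearMap.mem_ker.mp (bC ⟨e, he⟩).2)
    rw [hz] at h1
    simp at h1
  -- coordinates of bB ⟨0,_⟩
  set x : Fin 3 → ℤ := (bB ⟨0, hT 0⟩ : Fin 3 → ℤ) with hxdef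
  have hx : ∀ j : Fin 3, x j = if (0 : Fin 3) = j then 1 else 0 := by
    intro j
    have := hbB ⟨0, hT 0⟩ ⟨j, hT j⟩
    simpa [Subtype.ext_iff] using this
  -- x ∈ comap gam (range cobdry)
  have hmem : gam (Fin 3) x ∈ LinearMap.range (cobdry A B) := (bB ⟨0, hT 0⟩).2
  obtain ⟨f, hf⟩ := hmem
  -- bdry of singles
  have hb : ∀ j v : Fin 3, bdry A B (Pi.single j 1) v = if v = j then 1 else -1 := by
    intro j v
    rw [bdry_apply']
    simp only [Fin.sum_univ_three, hs]
    fin_cases j <;> fin_cases v <;> simp [Pi.single_apply]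
  set y : Fin 3 → ℤ := fun v => f (Pi.single v 1) with hy
  have key : ∀ j : Fin 3, f (bdry A B (Pi.single j 1)) = x j := by
    intro j
    have := congrFun (congrArg DFunLike.coe hf) (Pi.single j 1)
    rw [gam_single] at this
    exact this
  have hdecomp : ∀ j : Fin 3, bdry A B (Pi.single j 1)
      = (2 : ℤ) • Pi.single j 1 - (Pi.single 0 1 + Pi.single 1 1 + Pi.single 2 1) := by
    intro j
    funext v
    rw [hb]
    fin_cases j <;> fin_cases v <;> simp [Pi.single_apply]
  have eqn : ∀ j : Fin 3, 2 * y j - (y 0 + y 1 + y 2) = x j := by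
    intro j
    have := key j
    rw [hdecomp j] at this
    simpa [hy, map_sub, map_add, map_smul, two_mul] using this
  have e0 := eqn 0; have e1 := eqn 1; have e2 := eqn 2
  rw [hx 0] at e0; rw [hx 1] at e1; rw [hx 2] at e2
  norm_num at e0 e1 e2
  omega
end
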